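/- Let A and B be 2×2 real matrices and [A,B] = AB − BA. Then tr(adj(A)·[A,B]) = 0, and consequently the vectors A·x and [A,B]·x are linearly independent for every nonzero x ∈ ℝ² if and only if det(A)·det([A,B]) > 0. -/

import Mathlib

private lemma quad_ne_iff (a b c : ℝ) :
    (∀ x0 x1 : ℝ, ¬(x0 = 0 ∧ x1 = 0) → a*x0^2 + b*(x0*x1) + c*x1^2 ≠ 0) ↔
      0 < 4*(a*c) - b^2 := by
  constructor
  · intro h
    have ha : a ≠ 0 := by
      have := h 1 0 (by simp)
      simpa using this
    by_contra hle
    push_neg at hle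
    set s := Real.sqrt (b^2 - 4*(a*c)) with hs
    have hs2 : s^2 = b^2 - 4*(a*c) := Real.sq_sqrt (by linarith)
    have h2 := h (s - b) (2*a) (by
      rintro ⟨_, h2⟩
      exact ha (by linarith))
    apply h2
    linear_combination a * hs2
  · intro hpos x0 x1 hx hq
    have ha : a ≠ 0 := by
      intro h0; rw [h0] at hpos; nlinarith [sq_nonneg b]
    rcases eq_or_ne x1 0 with h1 | h1
    · subst h1
      have hx0 : x0 ≠ 0 := by simpa using hx
      have : a * x0 ^ 2 = 0 := by linear_combination hq
      exact mul_ne_zero ha (pow_ne_zero 2 hx0) this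
    · have h2 : 0 < x1 ^ 2 := by positivity
      have key : (2*a*x0 + b*x1)^2 + (4*(a*c) - b^2)*x1^2 = 0 := by
        linear_combination (4*a) * hq
      nlinarith [sq_nonneg (2*a*x0 + b*x1), mul_pos hpos h2]

private lemma li_iff (u v : Fin 2 → ℝ) :
    LinearIndependent ℝ ![u, v] ↔ u 0 * v 1 - u 1 * v 0 ≠ 0 := by
  have : (![u, v] : Fin 2 → Fin 2 → ℝ) = (Matrix.of ![u, v]).row := rfl
  rw [this, Matrix.linearIndependent_rows_iff_isUnit, Matrix.isUnit_iff_isUnit_det,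
    isUnit_iff_ne_zero, Matrix.det_fin_two]
  simp [Matrix.of_apply]

/-- `tr(adj(A)[A,B]) = 0`, and consequently `Ax` and `[A,B]x` are linearly
independent for all nonzero `x ∈ ℝ²` iff `det(A)·det[A,B] > 0`. -/
theorem trace_adjugate_commutator_eq_zero_and_linearIndependent_iff
    (A B : Matrix (Fin 2) (Fin 2) ℝ) :
    Matrix.trace (A.adjugate * (A * B - B * A)) = 0 ∧
    ((∀ x : Fin 2 → ℝ, x ≠ 0 →
        LinearIndependent ℝ ![A.mulVec x, (A * B - B * A).mulVec x]) ↔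
      0 < A.det * (A * B - B * A).det) := by
  set M : Matrix (Fin 2) (Fin 2) ℝ := A * B - B * A with hM
  refine ⟨?_, ?_⟩
  · simp only [Matrix.trace, Matrix.diag, Matrix.mul_apply, Matrix.adjugate_fin_two,
      Matrix.sub_apply, Fin.sum_univ_two, hM, Matrix.cons_val', Matrix.cons_val_zero,
      Matrix.cons_val_one, Matrix.head_cons, Matrix.head_fin_const, Matrix.empty_val',
      Matrix.cons_val_fin_one, Matrix.of_apply]
    ring
  · set a : ℝ := A 0 0 * M 1 0 - A 1 0 * M 0 0 with ha
    set b : ℝ := A 0 0 * M 1 1 - A 1 0 * M 0 1 + A 0 1 * M 1 0 - A 1 1 * M 0 0 with hb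
    set c : ℝ := A 0 1 * M 1 1 - A 1 1 * M 0 1 with hc
    have key : ∀ x : Fin 2 → ℝ,
        (A.mulVec x 0) * (M.mulVec x 1) - (A.mulVec x 1) * (M.mulVec x 0)
          = a*(x 0)^2 + b*(x 0 * x 1) + c*(x 1)^2 := by
      intro x
      rw [ha, hb, hc, hM]
      simp only [Matrix.mulVec, dotProduct, Matrix.mul_apply, Matrix.sub_apply,
        Fin.sum_univ_two]
      ring
    have hdisc : 4*(a*c) - b^2 = 4*(A.det * M.det) := by
      rw [ha, hb, hc, hM]
      simp only [Matrix.det_fin_two, Matrix.mul_apply, Matrix.sub_apply, Fin.sum_univ_two]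
      ring
    have hne : ∀ x : Fin 2 → ℝ, x ≠ 0 ↔ ¬(x 0 = 0 ∧ x 1 = 0) := by
      intro x
      rw [ne_eq, funext_iff, Fin.forall_fin_two]
      simp
    have main : (∀ x : Fin 2 → ℝ, x ≠ 0 →
        LinearIndependent ℝ ![A.mulVec x, M.mulVec x]) ↔
        (∀ x0 x1 : ℝ, ¬(x0 = 0 ∧ x1 = 0) → a*x0^2 + b*(x0*x1) + c*x1^2 ≠ 0) := by
      constructor
      · intro h x0 x1 hx
        have hx' : (![x0, x1] : Fin 2 → ℝ) ≠ 0 := by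
          rw [hne]; simpa using hx
        have h2 := (li_iff _ _).mp (h ![x0, x1] hx')
        rw [key ![x0, x1]] at h2
        simpa using h2
      · intro h x hx
        rw [li_iff, key x]
        exact h (x 0) (x 1) ((hne x).mp hx)
    rw [main, quad_ne_iff]
    constructor <;> intro h <;> nlinarith [hdisc]
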